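/- arXiv:2010.03840 — 3 statements merged into one kernel-verified Lean document; each statement's English description precedes it below -/
import Mathlib

section
/- Let T ⊆ ℕ^{<ℕ} be a tree with at least one infinite path, and for σ ∈ T let T_σ = {τ ∈ T : τ ⊑ σ or σ ⊑ τ}. Define a quasi-order on Q = {σ ∈ T : T_σ has an infinite path} by σ ⪯ τ iff (there exists ρ ∈ Q with ρ <_lex σ) or τ ⊑ σ, where ρ <_lex σ means ρ precedes σ in the lexicographic-by-first-difference ordering on incomparable strings. Then ⪯ is a quasi-order, it is total on equivalence classes, and every infinite ⪯-bad sequence (σ_i) consists of prefixes of the leftmost path of T of strictly increasing length (for i ≥ 1). -/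
/-- A tree on ℕ: a set of finite sequences closed under prefixes. -/
def IsTree (T : Set (List ℕ)) : Prop := ∀ σ ∈ T, ∀ τ : List ℕ, τ <+: σ → τ ∈ T

/-- σ is lexicographically less than τ at the first place where they differ. -/
def LexLt (σ τ : List ℕ) : Prop :=
  ∃ i : ℕ, (∀ j < i, σ[j]? = τ[j]?) ∧ ∃ a b : ℕ, σ[i]? = some a ∧ τ[i]? = some b ∧ a < b

/-- x is an infinite path through T. -/
def IsPath (T : Set (List ℕ)) (x : ℕ → ℕ) : Prop := ∀ k : ℕ, (List.range k).map x ∈ T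

/-- T_σ : the elements of T comparable with σ under the prefix relation. -/
def Tsub (T : Set (List ℕ)) (σ : List ℕ) : Set (List ℕ) := {τ ∈ T | τ <+: σ ∨ σ <+: τ}

/-- x is the leftmost path of T. -/
def IsLeftmostPath (T : Set (List ℕ)) (x : ℕ → ℕ) : Prop :=
  IsPath T x ∧ ∀ y : ℕ → ℕ, IsPath T y →
    x = y ∨ ∃ i : ℕ, x i < y i ∧ ∀ j < i, x j = y j

namespace QOESaux

lemma getElem?_rangeMap_lt (x : ℕ → ℕ) {k j : ℕ} (h : j < k) :
    ((List.range k).map x)[j]? = some (x j) := by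
  simp [List.getElem?_map, List.getElem?_range, h]

lemma getElem?_rangeMap_ge (x : ℕ → ℕ) {k j : ℕ} (h : k ≤ j) :
    ((List.range k).map x)[j]? = none := by
  simp [List.getElem?_map, List.getElem?_range]; omega

lemma prefix_getElem? {l1 l2 : List ℕ} (h : l1 <+: l2) {j : ℕ} (hj : j < l1.length) :
    l2[j]? = l1[j]? := by
  obtain ⟨t, rfl⟩ := h; rw [List.getElem?_append, if_pos hj]

lemma prefix_of_getElem? {σ τ : List ℕ} (h : ∀ j < σ.length, σ[j]? = τ[j]?) : σ <+: τ := by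
  have hστ : σ = τ.take σ.length := by
    apply List.ext_getElem?
    intro j
    by_cases hj : j < σ.length
    · rw [List.getElem?_take, if_pos hj, h j hj]
    · rw [List.getElem?_eq_none (by omega), List.getElem?_eq_none]
      simp only [List.length_take]
      omega
  exact hστ ▸ List.take_prefix _ _

lemma rangeMap_prefix (x : ℕ → ℕ) {k m : ℕ} (h : k ≤ m) :
    (List.range k).map x <+: (List.range m).map x := by
  apply List.IsPrefix.map
  have := List.take_range (i := k) (n := m)
  rw [min_eq_left h] at this
  exact this ▸ List.take_prefix _ _

lemma comparable_or_diff (σ τ : List ℕ) :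
    σ <+: τ ∨ τ <+: σ ∨ ∃ i : ℕ, (∀ j < i, σ[j]? = τ[j]?) ∧
      ∃ a b : ℕ, σ[i]? = some a ∧ τ[i]? = some b ∧ a ≠ b := by
  by_cases hd : ∃ i : ℕ, σ[i]? ≠ τ[i]?
  · have hne : σ[Nat.find hd]? ≠ τ[Nat.find hd]? := Nat.find_spec hd
    have hag : ∀ j < Nat.find hd, σ[j]? = τ[j]? :=
      fun j hj => not_not.mp (Nat.find_min hd hj)
    set i := Nat.find hd with hi
    cases hσi : σ[i]? with
    | none =>
      left
      have hlen : σ.length ≤ i := List.getElem?_eq_none_iff.mp hσi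
      exact prefix_of_getElem? fun j hj => hag j (lt_of_lt_of_le hj hlen)
    | some a =>
      cases hτi : τ[i]? with
      | none =>
        right; left
        have hlen : τ.length ≤ i := List.getElem?_eq_none_iff.mp hτi
        exact prefix_of_getElem? fun j hj => (hag j (lt_of_lt_of_le hj hlen)).symm
      | some b =>
        right; right
        refine ⟨i, hag, a, b, hσi, hτi, ?_⟩
        rintro rfl
        exact hne (hσi.trans hτi.symm)
  · push_neg at hd
    exact Or.inl (List.ext_getElem? hd ▸ List.prefix_refl σ)

lemma lexLt_of_prefix {ρ τ σ : List ℕ} (h : LexLt ρ τ) (hp : τ <+: σ) : LexLt ρ σ := by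
  obtain ⟨i, hag, a, b, ha, hb, hab⟩ := h
  have hi : i < τ.length := by
    by_contra h'
    rw [List.getElem?_eq_none (by omega)] at hb
    cases hb
  exact ⟨i, fun j hj => (hag j hj).trans (prefix_getElem? hp (hj.trans hi)).symm,
    a, b, ha, (prefix_getElem? hp hi).trans hb, hab⟩

lemma prefixPath_mem {T : Set (List ℕ)} {x : ℕ → ℕ} (hx : IsPath T x) (k : ℕ) :
    (List.range k).map x ∈ T ∧ ∃ z, IsPath (Tsub T ((List.range k).map x)) z := by
  refine ⟨hx k, x, fun m => ⟨hx m, ?_⟩⟩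
  rcases le_total m k with h | h
  · exact Or.inl (rangeMap_prefix x h)
  · exact Or.inr (rangeMap_prefix x h)

lemma eq_prefix_of_min {T : Set (List ℕ)} {x : ℕ → ℕ} (hx : IsLeftmostPath T x)
    {σ : List ℕ} {z : ℕ → ℕ} (hz : IsPath (Tsub T σ) z)
    (hno : ∀ ρ, (ρ ∈ T ∧ ∃ w, IsPath (Tsub T ρ) w) → ¬ LexLt ρ σ) :
    σ = (List.range σ.length).map x := by
  -- z extends σ
  have hzσ : (List.range σ.length).map z = σ := by
    obtain ⟨_, hcomp⟩ := hz σ.length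
    have hlen : ((List.range σ.length).map z).length = σ.length := by simp
    rcases hcomp with h | h
    · exact h.eq_of_length hlen
    · exact (h.eq_of_length hlen.symm).symm
  have hσz : ∀ j < σ.length, σ[j]? = some (z j) := by
    intro j hj
    rw [← hzσ]; exact getElem?_rangeMap_lt z hj
  have hzT : IsPath T z := fun k => (hz k).1
  have hσx : ∀ j < σ.length, σ[j]? = some (x j) := by
    rcases hx.2 z hzT with rfl | ⟨i, hlt, hagree⟩
    · exact hσz
    · have hi : σ.length ≤ i := by
        by_contra h'
        push_neg at h'
        refine hno ((List.range (i+1)).map x) (prefixPath_mem hx.1 (i+1))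
          ⟨i, fun j hj => ?_, x i, z i, getElem?_rangeMap_lt x (Nat.lt_succ_self i),
            hσz i h', hlt⟩
        rw [getElem?_rangeMap_lt x (hj.trans (Nat.lt_succ_self i)),
          hσz j (hj.trans h'), hagree j hj]
      intro j hj
      rw [hσz j hj, hagree j (lt_of_lt_of_le hj hi)]
  apply List.ext_getElem?
  intro j
  by_cases hj : j < σ.length
  · rw [hσx j hj, getElem?_rangeMap_lt x hj]
  · rw [List.getElem?_eq_none (by omega), getElem?_rangeMap_ge x (by omega)]

end QOESaux

open QOESaux in
/-- The quasi-order on extendible strings used in the reduction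
Π¹₁-CA ≤_W Σ¹₁-BS : it is a quasi-order, total, and every bad sequence consists
(from index 1 on) of prefixes of the leftmost path of strictly increasing length. -/
theorem quasiorder_on_extendible_strings (T : Set (List ℕ)) (hT : IsTree T)
    (x : ℕ → ℕ) (hx : IsLeftmostPath T x) :
    let Q : Set (List ℕ) := {σ ∈ T | ∃ z : ℕ → ℕ, IsPath (Tsub T σ) z}
    let pre : List ℕ → List ℕ → Prop := fun σ τ => (∃ ρ ∈ Q, LexLt ρ σ) ∨ τ <+: σ
    (∀ σ : List ℕ, pre σ σ) ∧
    (∀ σ τ ρ : List ℕ, σ ∈ Q → τ ∈ Q → ρ ∈ Q → pre σ τ → pre τ ρ → pre σ ρ) ∧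
    (∀ σ ∈ Q, ∀ τ ∈ Q, pre σ τ ∨ pre τ σ) ∧
    (∀ f : ℕ → List ℕ, (∀ n, f n ∈ Q) →
      (∀ i j, i < j → ¬ pre (f i) (f j)) →
      (∀ i, 1 ≤ i → f i = (List.range (f i).length).map x) ∧
      (∀ i j, 1 ≤ i → i < j → (f i).length < (f j).length)) := by
  intro Q pre
  refine ⟨fun σ => Or.inr (List.prefix_refl σ), ?_, ?_, ?_⟩
  · -- transitivity
    intro σ τ ρ _ _ _ h1 h2
    rcases h1 with h1 | h1
    · exact Or.inl h1
    rcases h2 with h2 | h2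
    · obtain ⟨ρ', hρ', hlex⟩ := h2
      exact Or.inl ⟨ρ', hρ', lexLt_of_prefix hlex h1⟩
    · exact Or.inr (h2.trans h1)
  · -- totality
    intro σ hσ τ hτ
    rcases comparable_or_diff σ τ with h | h | ⟨i, hag, a, b, ha, hb, hab⟩
    · exact Or.inr (Or.inr h)
    · exact Or.inl (Or.inr h)
    · rcases lt_or_gt_of_ne hab with hlt | hlt
      · exact Or.inr (Or.inl ⟨σ, hσ, i, hag, a, b, ha, hb, hlt⟩)
      · exact Or.inl (Or.inl ⟨τ, hτ, i, fun j hj => (hag j hj).symm, b, a, hb, ha, hlt⟩)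
  · -- bad sequences
    intro f hfQ hbad
    have hkey : ∀ i, f i = (List.range (f i).length).map x := by
      intro i
      obtain ⟨hfT, z, hz⟩ := hfQ i
      exact eq_prefix_of_min hx hz fun ρ hρ hlex =>
        hbad i (i+1) (Nat.lt_succ_self i) (Or.inl ⟨ρ, hρ, hlex⟩)
    have hlen : ∀ i j, i < j → (f i).length < (f j).length := by
      intro i j hij
      by_contra h
      push_neg at h
      apply hbad i j hij
      right
      rw [hkey i, hkey j]
      exact rangeMap_prefix x h
    exact ⟨fun i _ => hkey i, fun i j _ hij => hlen i j hij⟩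
end

section
/- Let T ⊆ ℕ^{<ℕ} be a tree with at least one infinite path, with leftmost path x. Let L = {σ ∈ T : for all τ ≤_lex σ in T, either T_τ has no infinite path or τ ⊑ σ}, ordered by the Kleene–Brouwer order. Then every element of L that is not a prefix of x lies in the well-founded part of L, and consequently every infinite strictly KB-descending sequence in L contains prefixes of x of arbitrarily large length. -/
/-- The Kleene–Brouwer order: σ ≤ τ iff τ is a prefix of σ, or σ <_lex τ. -/
def KBle (σ τ : List ℕ) : Prop := τ <+: σ ∨ LexLt σ τ

/-- Strict Kleene–Brouwer order. -/
def KBlt (σ τ : List ℕ) : Prop := KBle σ τ ∧ σ ≠ τ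

/-- τ is lexicographically below-or-prefix-comparable-below σ. -/
def LexBelow (τ σ : List ℕ) : Prop := LexLt τ σ ∨ τ <+: σ

/-! ### Auxiliary machinery -/

/-- Encoding of a finite string as an element of `ℕ → ℕ∞` (with `⊤` past the end),
to be compared in the lexicographic order on `Lex (ℕ → ℕ∞)`. -/
noncomputable def Fr (σ : List ℕ) : ℕ → ℕ∞ := fun i =>
  match σ[i]? with
  | none => ⊤
  | some a => (a : ℕ∞)

lemma Fr_none {σ : List ℕ} {i : ℕ} (h : σ[i]? = none) : Fr σ i = ⊤ := by simp [Fr, h]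
lemma Fr_some {σ : List ℕ} {i a : ℕ} (h : σ[i]? = some a) : Fr σ i = (a : ℕ∞) := by
  simp [Fr, h]
lemma Fr_congr {σ τ : List ℕ} {i : ℕ} (h : σ[i]? = τ[i]?) : Fr σ i = Fr τ i := by
  simp [Fr, h]
lemma Fr_inj_at {σ τ : List ℕ} {i : ℕ} (h : Fr σ i = Fr τ i) : σ[i]? = τ[i]? := by
  rcases hσ : σ[i]? with _ | a <;> rcases hτ : τ[i]? with _ | b <;>
    simp [Fr, hσ, hτ] at h ⊢
  · exact h

lemma lex_lt_iff {f g : ℕ → ℕ∞} :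
    toLex f < toLex g ↔ ∃ i, (∀ j < i, f j = g j) ∧ f i < g i := Iff.rfl

lemma prefix_getElem? {l₁ l₂ : List ℕ} (h : l₁ <+: l₂) {j : ℕ} (hj : j < l₁.length) :
    l₂[j]? = l₁[j]? := by
  obtain ⟨r, rfl⟩ := h
  exact List.getElem?_append_left hj

lemma prefix_of_getElem? {l σ : List ℕ}
    (h : ∀ j < l.length, σ[j]? = l[j]?) : l <+: σ := by
  rw [List.prefix_iff_eq_take]
  apply List.ext_getElem?
  intro j
  by_cases hj : j < l.length
  · rw [List.getElem?_take, if_pos hj, h j hj]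
  · rw [List.getElem?_eq_none (by exact Nat.le_of_not_lt hj),
      List.getElem?_eq_none (by simp; omega)]

lemma getElem?_some_lt {σ : List ℕ} {i a : ℕ} (h : σ[i]? = some a) : i < σ.length := by
  by_contra h'
  rw [List.getElem?_eq_none (Nat.le_of_not_lt h')] at h
  exact Option.some_ne_none a h.symm

lemma prefix_snoc {l σ : List ℕ} {a : ℕ} (h : l <+: σ) (ha : σ[l.length]? = some a) :
    l ++ [a] <+: σ := by
  apply prefix_of_getElem?
  intro j hj
  simp only [List.length_append, List.length_singleton] at hj
  by_cases h' : j < l.length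
  · rw [prefix_getElem? h h', List.getElem?_append_left h']
  · have hje : j = l.length := by omega
    subst hje
    rw [ha, List.getElem?_append_right (le_refl _)]
    simp

lemma KBlt_iff {σ τ : List ℕ} : KBlt σ τ ↔ toLex (Fr σ) < toLex (Fr τ) := by
  constructor
  · rintro ⟨hle | ⟨i, hagree, a, b, ha, hb, hab⟩, hne⟩
    · have hlt : τ.length < σ.length := by
        rcases Nat.lt_or_ge τ.length σ.length with h | h
        · exact h
        · exact absurd (List.IsPrefix.eq_of_length_le hle h).symm hne
      refine lex_lt_iff.mpr ⟨τ.length, fun j hj => Fr_congr (prefix_getElem? hle hj), ?_⟩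
      rw [Fr_none (List.getElem?_eq_none (le_refl _)),
        Fr_some (List.getElem?_eq_getElem hlt)]
      exact WithTop.coe_lt_top _
    · refine lex_lt_iff.mpr ⟨i, fun j hj => Fr_congr (hagree j hj), ?_⟩
      rw [Fr_some ha, Fr_some hb]
      exact_mod_cast hab
  · intro h
    obtain ⟨i, hagree, hlt⟩ := lex_lt_iff.mp h
    have hne : σ ≠ τ := by
      rintro rfl
      exact lt_irrefl _ hlt
    rcases hτ : τ[i]? with _ | b
    · refine ⟨Or.inl (prefix_of_getElem? fun j hj => ?_), hne⟩
      have hji : j < i := lt_of_lt_of_le hj (List.getElem?_eq_none_iff.mp hτ)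
      exact Fr_inj_at (hagree j hji)
    · rcases hσ : σ[i]? with _ | a
      · rw [Fr_none hσ] at hlt; exact absurd hlt (by simp)
      · refine ⟨Or.inr ⟨i, fun j hj => Fr_inj_at (hagree j hj), a, b, hσ, hτ, ?_⟩, hne⟩
        rw [Fr_some hσ, Fr_some hτ] at hlt
        exact_mod_cast hlt

lemma xs_getElem? {x : ℕ → ℕ} {k j : ℕ} :
    ((List.range k).map x)[j]? = if j < k then some (x j) else none := by
  by_cases hj : j < k
  · rw [if_pos hj, List.getElem?_map, List.getElem?_range hj]
    rfl
  · rw [if_neg hj, List.getElem?_eq_none (by simp; omega)]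

lemma xs_prefix (x : ℕ → ℕ) {j k : ℕ} (h : j ≤ k) :
    (List.range j).map x <+: (List.range k).map x := by
  apply prefix_of_getElem?
  intro i hi
  simp only [List.length_map, List.length_range] at hi
  rw [xs_getElem?, xs_getElem?, if_pos hi, if_pos (lt_of_lt_of_le hi h)]

lemma path_Tsub (T : Set (List ℕ)) (x : ℕ → ℕ) (hxp : IsPath T x) (l : ℕ) :
    IsPath (Tsub T ((List.range l).map x)) x := by
  intro k
  refine ⟨hxp k, ?_⟩
  rcases le_total k l with h | h
  · exact Or.inl (xs_prefix x h)
  · exact Or.inr (xs_prefix x h)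

lemma chain_lt (f : ℕ → List ℕ) (hdesc : ∀ n, KBlt (f (n+1)) (f n)) :
    ∀ m n, m < n → toLex (Fr (f n)) < toLex (Fr (f m)) := by
  intro m n h
  induction n with
  | zero => omega
  | succ n ih =>
    have h1 : toLex (Fr (f (n+1))) < toLex (Fr (f n)) := KBlt_iff.mp (hdesc n)
    rcases Nat.lt_or_ge m n with h' | h'
    · exact lt_trans h1 (ih h')
    · have hmn : m = n := by omega
      subst hmn; exact h1

lemma descending_aux (T : Set (List ℕ)) (hT : IsTree T) (x : ℕ → ℕ)
    (hxp : IsPath T x)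
    (hleft : ∀ y : ℕ → ℕ, IsPath T y → x = y ∨ ∃ i, x i < y i ∧ ∀ j < i, x j = y j)
    (f : ℕ → List ℕ) (hfT : ∀ n, f n ∈ T)
    (hfL : ∀ n, ∀ τ ∈ T, LexBelow τ (f n) →
      (¬ ∃ z : ℕ → ℕ, IsPath (Tsub T τ) z) ∨ τ <+: f n)
    (hdesc : ∀ n, KBlt (f (n+1)) (f n)) :
    ∀ k : ℕ, ∃ n : ℕ, k ≤ (f n).length ∧ f n = (List.range (f n).length).map x := by
  classical
  have hchain := chain_lt f hdesc
  -- stabilization of prefixes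
  have hstab : ∀ k : ℕ, ∃ N t, (t : List ℕ).length = k ∧ ∀ n, N ≤ n → t <+: f n := by
    intro k
    induction k with
    | zero => exact ⟨0, [], rfl, fun n _ => List.nil_prefix⟩
    | succ k ih =>
      obtain ⟨N, t, hlen, hpre⟩ := ih
      have hstep : ∀ n, N ≤ n → Fr (f (n+1)) k ≤ Fr (f n) k := by
        intro n hn
        obtain ⟨i, hagree, hlt⟩ := lex_lt_iff.mp (hchain n (n+1) (Nat.lt_succ_self n))
        rcases lt_trichotomy i k with h | h | h
        · exfalso
          have e1 : (f (n+1))[i]? = t[i]? :=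
            prefix_getElem? (hpre (n+1) (by omega)) (by omega)
          have e2 : (f n)[i]? = t[i]? := prefix_getElem? (hpre n hn) (by omega)
          have := Fr_congr (σ := f (n+1)) (τ := f n) (i := i) (e1.trans e2.symm)
          rw [this] at hlt
          exact lt_irrefl _ hlt
        · subst h; exact le_of_lt hlt
        · exact le_of_eq (hagree k h)
      have hmono : ∀ m, N ≤ m → ∀ n, m ≤ n → Fr (f n) k ≤ Fr (f m) k := by
        intro m hm n hn
        induction n, hn using Nat.le_induction with
        | base => exact le_refl _
        | succ n hn ih2 => exact le_trans (hstep n (le_trans hm hn)) ih2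
      obtain ⟨v, ⟨n0, hn0, hv⟩, hmin⟩ :=
        (wellFounded_lt (α := ℕ∞)).has_min {v | ∃ n, N ≤ n ∧ Fr (f n) k = v}
          ⟨Fr (f N) k, N, le_refl _, rfl⟩
      have hconst : ∀ n, n0 ≤ n → (f n)[k]? = (f n0)[k]? := by
        intro n hn
        apply Fr_inj_at
        have h1 : Fr (f n) k ≤ v := hv ▸ hmono n0 hn0 n hn
        have h2 : ¬ Fr (f n) k < v := hmin _ ⟨n, le_trans hn0 hn, rfl⟩
        rw [hv]
        exact le_antisymm h1 (le_of_not_gt h2)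
      rcases h0 : (f n0)[k]? with _ | a
      · exfalso
        have e : ∀ n, n0 ≤ n → f n = t := by
          intro n hn
          have hnone : (f n)[k]? = none := (hconst n hn).trans h0
          have hlen2 : (f n).length ≤ k := List.getElem?_eq_none_iff.mp hnone
          exact ((hpre n (le_trans hn0 hn)).eq_of_length_le (by omega)).symm
        have hcc := hchain n0 (n0+1) (Nat.lt_succ_self _)
        rw [e n0 (le_refl _), e (n0+1) (by omega)] at hcc
        exact lt_irrefl _ hcc
      · refine ⟨n0, t ++ [a], by simp [hlen], ?_⟩
        intro n hn
        have hsome : (f n)[k]? = some a := (hconst n hn).trans h0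
        exact prefix_snoc (hpre n (le_trans hn0 hn)) (by rw [hlen]; exact hsome)
  choose N t hlen hpre using hstab
  have hcoh : ∀ j k, j ≤ k → t j <+: t k := by
    intro j k h
    have h1 : t j <+: f (max (N j) (N k)) := hpre j _ (le_max_left _ _)
    have h2 : t k <+: f (max (N j) (N k)) := hpre k _ (le_max_right _ _)
    exact List.prefix_of_prefix_length_le h1 h2 (by rw [hlen, hlen]; exact h)
  set z : ℕ → ℕ := fun j => ((t (j+1))[j]?).getD 0 with hz
  have hzt : ∀ j, (t (j+1))[j]? = some (z j) := by
    intro j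
    rcases h' : (t (j+1))[j]? with _ | a
    · exfalso
      have := List.getElem?_eq_none_iff.mp h'
      rw [hlen] at this; omega
    · rw [hz]; simp [h']
  have hzk : ∀ k, (List.range k).map z = t k := by
    intro k
    apply List.ext_getElem?
    intro j
    rw [xs_getElem?]
    by_cases hj : j < k
    · rw [if_pos hj]
      have h1 : (t k)[j]? = (t (j+1))[j]? :=
        prefix_getElem? (hcoh (j+1) k hj) (by rw [hlen]; omega)
      rw [h1, hzt j]
    · rw [if_neg hj, List.getElem?_eq_none (by rw [hlen]; omega)]
  have hzpath : IsPath T z := by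
    intro k
    rw [hzk]
    exact hT (f (N k)) (hfT (N k)) (t k) (hpre k (N k) (le_refl _))
  have hxz : x = z := by
    rcases hleft z hzpath with h | ⟨i, hlt, hagree⟩
    · exact h
    · exfalso
      have hfn : ∀ j, j < i+1 → (f (N (i+1)))[j]? = some (z j) := by
        intro j hj
        rw [prefix_getElem? (hpre (i+1) (N (i+1)) (le_refl _)) (by rw [hlen]; omega),
          ← hzk (i+1), xs_getElem?, if_pos hj]
      have hlex : LexLt ((List.range (i+1)).map x) (f (N (i+1))) := by
        refine ⟨i, ?_, x i, z i, ?_, ?_, hlt⟩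
        · intro j hj
          rw [xs_getElem?, if_pos (by omega), hfn j (by omega), hagree j hj]
        · rw [xs_getElem?, if_pos (by omega)]
        · exact hfn i (by omega)
      rcases hfL (N (i+1)) _ (hxp (i+1)) (Or.inl hlex) with hnop | hp
      · exact hnop ⟨x, path_Tsub T x hxp (i+1)⟩
      · have h3 := prefix_getElem? hp (j := i) (by simp)
        rw [hfn i (by omega), xs_getElem?, if_pos (by omega)] at h3
        exact absurd (Option.some.inj h3).symm (ne_of_lt hlt)
  have hxf : ∀ k n, N k ≤ n → (List.range k).map x <+: f n := by
    intro k n hn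
    rw [hxz, hzk]
    exact hpre k n hn
  intro k
  refine ⟨N k, ?_, ?_⟩
  · have h1 := (hpre k (N k) (le_refl _)).length_le
    rw [hlen] at h1
    exact h1
  · set σ := f (N k) with hσdef
    by_contra hne
    have hex : ∃ i, i < σ.length ∧ σ[i]? ≠ some (x i) := by
      by_contra h'
      push_neg at h'
      apply hne
      apply List.ext_getElem?
      intro j
      by_cases hj : j < σ.length
      · rw [h' j hj, xs_getElem?, if_pos (by omega)]
      · rw [List.getElem?_eq_none (by omega),
          List.getElem?_eq_none (by simp; omega)]
    have hispec := Nat.find_spec hex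
    set i := Nat.find hex with hidef
    obtain ⟨hilen, hine⟩ := hispec
    have hmin : ∀ j, j < i → σ[j]? = some (x j) := by
      intro j hj
      have h' := Nat.find_min hex hj
      push_neg at h'
      exact h' (by omega)
    obtain ⟨b, hb⟩ : ∃ b, σ[i]? = some b := ⟨σ[i], List.getElem?_eq_getElem hilen⟩
    have hbne : b ≠ x i := fun h => hine (h ▸ hb)
    rcases Nat.lt_or_ge b (x i) with hblt | hbge
    · -- σ is strictly lex-left of x: later terms of f extend x past σ, contradiction
      set n' := max (N (σ.length + 1)) (N k + 1) with hn'def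
      have hpre' : (List.range (σ.length + 1)).map x <+: f n' :=
        hxf _ _ (le_max_left _ _)
      have hne' : N k < n' := lt_of_lt_of_le (Nat.lt_succ_self _) (le_max_right _ _)
      have h1 : toLex (Fr (f n')) < toLex (Fr σ) := hchain (N k) n' hne'
      have hfn' : ∀ j, j ≤ σ.length → (f n')[j]? = some (x j) := by
        intro j hj
        rw [prefix_getElem? hpre' (by simp; omega), xs_getElem?, if_pos (by omega)]
      have h2 : toLex (Fr σ) < toLex (Fr (f n')) := by
        refine lex_lt_iff.mpr ⟨i, ?_, ?_⟩
        · intro j hj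
          exact Fr_congr ((hmin j hj).trans (hfn' j (by omega)).symm)
        · rw [Fr_some hb, Fr_some (hfn' i (by omega))]
          exact_mod_cast hblt
      exact lt_irrefl _ (lt_trans h1 h2)
    · have hxb : x i < b := lt_of_le_of_ne hbge fun h => hbne h.symm
      have hlex : LexLt ((List.range (i+1)).map x) σ := by
        refine ⟨i, ?_, x i, b, ?_, hb, hxb⟩
        · intro j hj
          rw [xs_getElem?, if_pos (by omega), hmin j hj]
        · rw [xs_getElem?, if_pos (by omega)]
      rcases hfL (N k) _ (hxp (i+1)) (Or.inl hlex) with hnop | hp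
      · exact hnop ⟨x, path_Tsub T x hxp (i+1)⟩
      · have h3 := prefix_getElem? hp (j := i) (by simp)
        rw [hb, xs_getElem?, if_pos (by omega)] at h3
        exact hbne (Option.some.inj h3)

/-- In the linear order L of strings of T lexicographically below the leftmost
path x, ordered by Kleene–Brouwer: every element which is not a prefix of x lies
in the well-founded part, and every infinite strictly KB-descending sequence in L
contains prefixes of x of arbitrarily large length. -/
theorem leftmost_path_via_KB (T : Set (List ℕ)) (hT : IsTree T)
    (x : ℕ → ℕ) (hx : IsLeftmostPath T x) :
    let L : Set (List ℕ) := {σ ∈ T | ∀ τ ∈ T, LexBelow τ σ →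
      (¬ ∃ z : ℕ → ℕ, IsPath (Tsub T τ) z) ∨ τ <+: σ}
    (∀ σ ∈ L, σ ≠ (List.range σ.length).map x →
      ¬ ∃ f : ℕ → List ℕ, f 0 = σ ∧ (∀ n, f n ∈ L) ∧ ∀ n, KBlt (f (n+1)) (f n)) ∧
    (∀ f : ℕ → List ℕ, (∀ n, f n ∈ L) → (∀ n, KBlt (f (n+1)) (f n)) →
      ∀ k : ℕ, ∃ n : ℕ, k ≤ (f n).length ∧ f n = (List.range (f n).length).map x) := by
  intro L
  obtain ⟨hxp, hleft⟩ := hx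
  have hmemL : ∀ σ, σ ∈ L → σ ∈ T ∧ ∀ τ ∈ T, LexBelow τ σ →
      (¬ ∃ z : ℕ → ℕ, IsPath (Tsub T τ) z) ∨ τ <+: σ := fun σ h => h
  have part2 : ∀ f : ℕ → List ℕ, (∀ n, f n ∈ L) → (∀ n, KBlt (f (n+1)) (f n)) →
      ∀ k : ℕ, ∃ n : ℕ, k ≤ (f n).length ∧ f n = (List.range (f n).length).map x :=
    fun f hfL hdesc => descending_aux T hT x hxp hleft f (fun n => (hmemL _ (hfL n)).1)
      (fun n => (hmemL _ (hfL n)).2) hdesc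
  refine ⟨?_, part2⟩
  rintro σ hσ hne ⟨f, hf0, hfL, hdesc⟩
  obtain ⟨n, hlen, hfx⟩ := part2 f hfL hdesc (σ.length + 1)
  have hn0 : 0 < n := by
    rcases Nat.eq_zero_or_pos n with rfl | h
    · rw [hf0] at hlen; omega
    · exact h
  have hKB : KBlt (f n) σ := by
    rw [← hf0]
    exact KBlt_iff.mpr (chain_lt f hdesc 0 n hn0)
  obtain ⟨hσT, hσL⟩ := hmemL σ hσ
  have hlenm : σ.length + 1 ≤ (f n).length := hlen
  have hfnj : ∀ j, j < (f n).length → (f n)[j]? = some (x j) := by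
    intro j hj
    rw [hfx, xs_getElem?, if_pos (by simpa using hj)]
  rcases hKB.1 with hp | hlex
  · -- σ is a prefix of f n, which is a prefix of x : contradiction with hne
    apply hne
    apply List.ext_getElem?
    intro j
    by_cases hj : j < σ.length
    · rw [← prefix_getElem? hp hj, hfnj j (by omega), xs_getElem?, if_pos (by omega)]
    · rw [List.getElem?_eq_none (by omega),
        List.getElem?_eq_none (by simp; omega)]
  · obtain ⟨i, hagree, a, b, ha, hb, hab⟩ := hlex
    have him : i < (f n).length := getElem?_some_lt ha
    have hxa : a = x i := by
      rw [hfnj i him] at ha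
      exact (Option.some.inj ha).symm
    have hlexτ : LexLt ((List.range (i+1)).map x) σ := by
      refine ⟨i, ?_, x i, b, ?_, hb, hxa ▸ hab⟩
      · intro j hj
        rw [xs_getElem?, if_pos (by omega), ← hagree j hj, hfnj j (by omega)]
      · rw [xs_getElem?, if_pos (by omega)]
    rcases hσL _ (hxp (i+1)) (Or.inl hlexτ) with hnop | hp
    · exact hnop ⟨x, path_Tsub T x hxp (i+1)⟩
    · have h3 := prefix_getElem? hp (j := i) (by simp)
      rw [hb, xs_getElem?, if_pos (by omega)] at h3
      have hbx : b = x i := Option.some.inj h3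
      omega
end

section
/- Let g : ℕ → ℕ be a function and define a linear order on ℕ by processing stages: at stage s+1, if g(s) = g(s+1) place s+1 immediately above s when g(s)=0 and immediately below s when g(s)>0, and if g(s) ≠ g(s+1) place s+1 at the top. If g is eventually constant with nonzero value, the resulting order has order type n + ω* for some n ∈ ℕ (in particular it is ill-founded); if g is eventually constantly 0 or takes each value only finitely often while being unbounded, the resulting order has order type ω (in particular it is well-founded). -/
/-- The order of type n + ω* : a finite order of size n followed above by a
reversed copy of ω. -/
def FinOmegaStarLe (n : ℕ) : (Fin n ⊕ ℕ) → (Fin n ⊕ ℕ) → Prop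
  | Sum.inl i, Sum.inl j => i ≤ j
  | Sum.inl _, Sum.inr _ => True
  | Sum.inr _, Sum.inl _ => False
  | Sum.inr i, Sum.inr j => j ≤ i

/-- The stage construction driven by g : if g(s) = g(s+1) place s+1 immediately
above s (when the common value is 0) or immediately below s (when it is nonzero),
and if g(s) ≠ g(s+1) place s+1 on top. If g is eventually constant with nonzero
value the order has type n + ω* (in particular ill-founded); if g is eventually 0
or takes each value finitely often while being unbounded, the order has type ω
(in particular well-founded). -/
theorem stage_construction_order_type (g : ℕ → ℕ) (r : ℕ → ℕ → Prop)
    (hrefl : ∀ a, r a a) (htrans : ∀ a b c, r a b → r b c → r a c)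
    (hantisymm : ∀ a b, r a b → r b a → a = b) (htotal : ∀ a b, r a b ∨ r b a)
    (hcase1 : ∀ s, g s = g (s+1) → g s = 0 →
      r s (s+1) ∧ ∀ t ≤ s, r t s ∨ r (s+1) t)
    (hcase2 : ∀ s, g s = g (s+1) → g s ≠ 0 →
      r (s+1) s ∧ ∀ t ≤ s, r s t ∨ r t (s+1))
    (hcase3 : ∀ s, g s ≠ g (s+1) → ∀ t ≤ s, r t (s+1)) :
    ((∃ N v : ℕ, v ≠ 0 ∧ ∀ s, N ≤ s → g s = v) →
      (∃ (n : ℕ) (e : (Fin n ⊕ ℕ) → ℕ), Function.Bijective e ∧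
        ∀ a b, FinOmegaStarLe n a b ↔ r (e a) (e b)) ∧
      (∃ f : ℕ → ℕ, ∀ m, r (f (m+1)) (f m) ∧ f (m+1) ≠ f m)) ∧
    (((∃ N : ℕ, ∀ s, N ≤ s → g s = 0) ∨
        ((∀ v : ℕ, {s : ℕ | g s = v}.Finite) ∧ ∀ b : ℕ, ∃ s, b < g s)) →
      (∃ e : ℕ → ℕ, Function.Bijective e ∧ ∀ a b : ℕ, a ≤ b ↔ r (e a) (e b)) ∧
      WellFounded (fun a b : ℕ => r a b ∧ a ≠ b)) := by
  classical
  constructor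
  · rintro ⟨N, v, hv, hNv⟩
    have hexN : ∃ n : ℕ, ∀ s, n ≤ s → g s = v := ⟨N, hNv⟩
    obtain ⟨N', hN', hNmin⟩ :
        ∃ n, (∀ s, n ≤ s → g s = v) ∧ ∀ m, m < n → ¬ ∀ s, m ≤ s → g s = v :=
      ⟨Nat.find hexN, Nat.find_spec hexN, fun m hm => Nat.find_min hexN hm⟩
    have hdesc : ∀ s, N' ≤ s → r (s+1) s := by
      intro s hs
      have h1 : g s = g (s+1) := by rw [hN' s hs, hN' (s+1) (by omega)]
      have h2 : g s ≠ 0 := by rw [hN' s hs]; exact hv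
      exact (hcase2 s h1 h2).1
    have hchain : ∀ u u', N' ≤ u → u ≤ u' → r u' u := by
      intro u u' hu huu
      induction u', huu using Nat.le_induction with
      | base => exact hrefl u
      | succ u' h ih => exact htrans _ _ _ (hdesc u' (by omega)) ih
    have hlow : ∀ t, t < N' → ∀ u, N' ≤ u → r t u ∧ t ≠ u := by
      intro t ht u hu
      induction u, hu using Nat.le_induction with
      | base =>
        have hnot := hNmin (N' - 1) (by omega)
        push_neg at hnot
        obtain ⟨s, hs1, hs2⟩ := hnot
        have hsN : s = N' - 1 := by
          by_contra hc
          exact hs2 (hN' s (by omega))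
        have hne : g (N'-1) ≠ g ((N'-1)+1) := by
          rw [show (N'-1)+1 = N' from by omega, hN' N' le_rfl, ← hsN]
          exact hs2
        have hr := hcase3 (N'-1) hne t (by omega)
        rw [show (N'-1)+1 = N' from by omega] at hr
        exact ⟨hr, by omega⟩
      | succ u hu ih =>
        obtain ⟨h1, h2⟩ := ih
        have hg1 : g u = g (u+1) := by rw [hN' u hu, hN' (u+1) (by omega)]
        have hg2 : g u ≠ 0 := by rw [hN' u hu]; exact hv
        rcases (hcase2 u hg1 hg2).2 t (by omega) with h | h
        · exact absurd (hantisymm t u h1 h) h2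
        · exact ⟨h, by omega⟩
    -- rank on the finite initial part
    let Fk : ℕ → Finset ℕ := fun t => (Finset.range N').filter (fun u => r u t ∧ u ≠ t)
    let rk : ℕ → ℕ := fun t => (Fk t).card
    have hFk_mem : ∀ t u, u ∈ Fk t ↔ (u < N' ∧ r u t ∧ u ≠ t) := by
      intro t u
      simp [Fk, Finset.mem_filter, Finset.mem_range, and_assoc]
    have hrk_lt : ∀ t t', t < N' → t' < N' → r t t' → t ≠ t' → rk t < rk t' := by
      intro t t' ht ht' hr hne
      have hsub : Fk t ⊆ Fk t' := by
        intro u hu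
        obtain ⟨h1, h2, h3⟩ := (hFk_mem t u).mp hu
        refine (hFk_mem t' u).mpr ⟨h1, htrans u t t' h2 hr, ?_⟩
        intro hEq
        rw [hEq] at h2
        exact hne (hantisymm t t' hr h2)
      apply Finset.card_lt_card
      rw [Finset.ssubset_iff_of_subset hsub]
      exact ⟨t, (hFk_mem t' t).mpr ⟨ht, hr, hne⟩, fun hmem => ((hFk_mem t t).mp hmem).2.2 rfl⟩
    have hrk_bound : ∀ t, t < N' → rk t < N' := by
      intro t ht
      have hsub : Fk t ⊆ (Finset.range N').erase t := by
        intro u hu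
        obtain ⟨h1, h2, h3⟩ := (hFk_mem t u).mp hu
        exact Finset.mem_erase.mpr ⟨h3, Finset.mem_range.mpr h1⟩
      have h1 := Finset.card_le_card hsub
      rw [Finset.card_erase_of_mem (Finset.mem_range.mpr ht), Finset.card_range] at h1
      have : rk t ≤ N' - 1 := h1
      omega
    have hrk_inj : ∀ t t', t < N' → t' < N' → rk t = rk t' → t = t' := by
      intro t t' ht ht' h
      by_contra hne
      rcases htotal t t' with hr | hr
      · have := hrk_lt t t' ht ht' hr hne
        omega
      · have := hrk_lt t' t ht' ht hr (Ne.symm hne)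
        omega
    have hrk_surj : ∀ k, k < N' → ∃ t, t < N' ∧ rk t = k := by
      intro k hk
      have himg : Finset.image rk (Finset.range N') = Finset.range N' := by
        apply Finset.eq_of_subset_of_card_le
        · intro y hy
          obtain ⟨t, ht, rfl⟩ := Finset.mem_image.mp hy
          exact Finset.mem_range.mpr (hrk_bound t (Finset.mem_range.mp ht))
        · have hc : (Finset.image rk (Finset.range N')).card = (Finset.range N').card :=
            Finset.card_image_of_injOn (fun a ha b hb hab =>
              hrk_inj a b (Finset.mem_range.mp ha) (Finset.mem_range.mp hb) hab)
          omega
      have hmem : k ∈ Finset.image rk (Finset.range N') := by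
        rw [himg]; exact Finset.mem_range.mpr hk
      obtain ⟨t, ht, hrkt⟩ := Finset.mem_image.mp hmem
      exact ⟨t, Finset.mem_range.mp ht, hrkt⟩
    have hσex : ∀ i : Fin N', ∃ t, t < N' ∧ rk t = (i : ℕ) := fun i => hrk_surj i i.isLt
    let σ : Fin N' → ℕ := fun i => (hσex i).choose
    have hσ1 : ∀ i, σ i < N' := fun i => (hσex i).choose_spec.1
    have hσ2 : ∀ i : Fin N', rk (σ i) = (i : ℕ) := fun i => (hσex i).choose_spec.2
    refine ⟨⟨N', Sum.elim σ (fun j => N' + j), ⟨?_, ?_⟩, ?_⟩, ⟨fun m => N + m, fun m => ?_⟩⟩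
    · rintro (i | i) (j | j) h
      · simp only [Sum.elim_inl] at h
        have hval : (i : ℕ) = (j : ℕ) := by rw [← hσ2 i, ← hσ2 j, h]
        exact congrArg Sum.inl (Fin.ext hval)
      · simp only [Sum.elim_inl, Sum.elim_inr] at h
        exact absurd h (by have := hσ1 i; omega)
      · simp only [Sum.elim_inl, Sum.elim_inr] at h
        exact absurd h (by have := hσ1 j; omega)
      · simp only [Sum.elim_inr] at h
        exact congrArg Sum.inr (by omega)
    · intro y
      by_cases hy : y < N'
      · refine ⟨Sum.inl ⟨rk y, hrk_bound y hy⟩, ?_⟩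
        simp only [Sum.elim_inl]
        exact hrk_inj _ _ (hσ1 _) hy (by rw [hσ2])
      · refine ⟨Sum.inr (y - N'), ?_⟩
        simp only [Sum.elim_inr]
        omega
    · rintro (i | i) (j | j)
      · simp only [Sum.elim_inl, FinOmegaStarLe]
        rw [Fin.le_def]
        constructor
        · intro hij
          rcases htotal (σ i) (σ j) with h | h
          · exact h
          · by_cases he : σ i = σ j
            · rw [he]; exact hrefl _
            · have hlt := hrk_lt (σ j) (σ i) (hσ1 j) (hσ1 i) h (fun hh => he hh.symm)
              rw [hσ2, hσ2] at hlt
              exfalso; omega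
        · intro h
          by_cases he : σ i = σ j
          · have hval : (i : ℕ) = (j : ℕ) := by rw [← hσ2 i, ← hσ2 j, he]
            omega
          · have hlt := hrk_lt (σ i) (σ j) (hσ1 i) (hσ1 j) h he
            rw [hσ2, hσ2] at hlt
            omega
      · simp only [Sum.elim_inl, Sum.elim_inr, FinOmegaStarLe]
        exact iff_of_true trivial ((hlow (σ i) (hσ1 i) (N' + j) (by omega)).1)
      · simp only [Sum.elim_inl, Sum.elim_inr, FinOmegaStarLe]
        refine ⟨False.elim, fun h => ?_⟩
        obtain ⟨h1, h2⟩ := hlow (σ j) (hσ1 j) (N' + i) (by omega)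
        exact h2 (hantisymm (σ j) (N' + i) h1 h)
      · simp only [Sum.elim_inr, FinOmegaStarLe]
        constructor
        · intro hji
          exact hchain (N' + j) (N' + i) (by omega) (by omega)
        · intro h
          by_contra hji
          push_neg at hji
          have h2 := hchain (N' + i) (N' + j) (by omega) (by omega)
          have h3 := hantisymm _ _ h h2
          omega
    · have hg1 : g (N + m) = g (N + m + 1) := by
        rw [hNv (N + m) (by omega), hNv (N + m + 1) (by omega)]
      have hg2 : g (N + m) ≠ 0 := by rw [hNv (N + m) (by omega)]; exact hv
      exact ⟨(hcase2 (N + m) hg1 hg2).1, by show N + (m+1) ≠ N + m; omega⟩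
  · intro h2
    have key : ∀ x : ℕ, ∃ s, x ≤ s ∧ ∀ t, t ≤ s → r t (s+1) := by
      rcases h2 with ⟨N, hN⟩ | ⟨hfin, hub⟩
      · have hexN : ∃ n : ℕ, ∀ s, n ≤ s → g s = 0 := ⟨N, hN⟩
        obtain ⟨N', hN', hNmin⟩ :
            ∃ n, (∀ s, n ≤ s → g s = 0) ∧ ∀ m, m < n → ¬ ∀ s, m ≤ s → g s = 0 :=
          ⟨Nat.find hexN, Nat.find_spec hexN, fun m hm => Nat.find_min hexN hm⟩
        have hmax : ∀ s, N' ≤ s → ∀ t, t ≤ s → r t s := by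
          intro s hs
          induction s, hs using Nat.le_induction with
          | base =>
            intro t ht
            rcases Nat.eq_or_lt_of_le ht with h | h
            · rw [h]; exact hrefl _
            · have hnot := hNmin (N' - 1) (by omega)
              push_neg at hnot
              obtain ⟨u, hu1, hu2⟩ := hnot
              have huN : u = N' - 1 := by
                by_contra hc
                exact hu2 (hN' u (by omega))
              have hne : g (N'-1) ≠ g ((N'-1)+1) := by
                rw [show (N'-1)+1 = N' from by omega, hN' N' le_rfl, ← huN]
                exact hu2
              have hr := hcase3 (N'-1) hne t (by omega)
              rwa [show (N'-1)+1 = N' from by omega] at hr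
          | succ s hs ih =>
            intro t ht
            have hg1 : g s = g (s+1) := by rw [hN' s hs, hN' (s+1) (by omega)]
            have h1 : r s (s+1) := (hcase1 s hg1 (hN' s hs)).1
            rcases Nat.eq_or_lt_of_le ht with h | h
            · rw [h]; exact hrefl _
            · exact htrans t s (s+1) (ih t (by omega)) h1
        intro x
        refine ⟨max x N', le_max_left _ _, ?_⟩
        intro t ht
        have hs : N' ≤ max x N' := le_max_right _ _
        have hg1 : g (max x N') = g (max x N' + 1) := by
          rw [hN' _ hs, hN' _ (by omega)]
        have h1 : r (max x N') (max x N' + 1) := (hcase1 _ hg1 (hN' _ hs)).1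
        exact htrans _ _ _ (hmax _ hs t ht) h1
      · intro x
        have hex : ∃ s, x ≤ s ∧ g s ≠ g (s+1) := by
          by_contra hc
          push_neg at hc
          have hconst : ∀ s, x ≤ s → g s = g x := by
            intro s hs
            induction s, hs using Nat.le_induction with
            | base => rfl
            | succ s hs ih => rw [← hc s hs]; exact ih
          have hsub : Set.Ici x ⊆ {s | g s = g x} := fun s hs => hconst s hs
          exact ((Set.Ici_infinite x).mono hsub) (hfin (g x))
        obtain ⟨s, hs1, hs2⟩ := hex
        exact ⟨s, hs1, fun t ht => hcase3 s hs2 t ht⟩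
    have hLfin : ∀ x : ℕ, {u | r u x ∧ u ≠ x}.Finite := by
      intro x
      obtain ⟨s, hxs, htop⟩ := key x
      have hstep : ∀ u, s+1 ≤ u → r x u ∧ x ≠ u := by
        intro u hu
        induction u, hu using Nat.le_induction with
        | base => exact ⟨htop x hxs, by omega⟩
        | succ u hu ih =>
          obtain ⟨h1, h2⟩ := ih
          by_cases hg : g u = g (u+1)
          · by_cases h0 : g u = 0
            · exact ⟨htrans x u (u+1) h1 (hcase1 u hg h0).1, by omega⟩
            · rcases (hcase2 u hg h0).2 x (by omega) with h | h
              · exact absurd (hantisymm x u h1 h) h2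
              · exact ⟨h, by omega⟩
          · exact ⟨hcase3 u hg x (by omega), by omega⟩
      apply Set.Finite.subset (Set.finite_Iic s)
      intro u hu
      obtain ⟨h1, h2⟩ := hu
      simp only [Set.mem_Iic]
      by_contra hc
      push_neg at hc
      obtain ⟨h3, h4⟩ := hstep u (by omega)
      exact h4 (hantisymm x u h3 h1)
    let L : ℕ → Finset ℕ := fun x => (hLfin x).toFinset
    let rk : ℕ → ℕ := fun x => (L x).card
    have hL_mem : ∀ x u, u ∈ L x ↔ (r u x ∧ u ≠ x) := fun x u => (hLfin x).mem_toFinset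
    have hrk_lt : ∀ x y, r x y → x ≠ y → rk x < rk y := by
      intro x y hr hne
      have hsub : L x ⊆ L y := by
        intro u hu
        obtain ⟨h1, h2⟩ := (hL_mem x u).mp hu
        refine (hL_mem y u).mpr ⟨htrans u x y h1 hr, ?_⟩
        intro hEq
        rw [hEq] at h1
        exact hne (hantisymm x y hr h1)
      apply Finset.card_lt_card
      rw [Finset.ssubset_iff_of_subset hsub]
      exact ⟨x, (hL_mem y x).mpr ⟨hr, hne⟩, fun hmem => ((hL_mem x x).mp hmem).2 rfl⟩
    have hrk_inj : ∀ x y, rk x = rk y → x = y := by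
      intro x y h
      by_contra hne
      rcases htotal x y with hr | hr
      · have := hrk_lt x y hr hne
        omega
      · have := hrk_lt y x hr (Ne.symm hne)
        omega
    have hrk_surj : ∀ k, ∃ x, rk x = k := by
      have hdown : ∀ y k', k' < rk y → ∃ x, rk x = k' := by
        intro y k' hk'
        have himg : Finset.image rk (L y) = Finset.range (rk y) := by
          apply Finset.eq_of_subset_of_card_le
          · intro z hz
            obtain ⟨u, hu, rfl⟩ := Finset.mem_image.mp hz
            obtain ⟨h1, h2⟩ := (hL_mem y u).mp hu
            exact Finset.mem_range.mpr (hrk_lt u y h1 h2)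
          · have hc : (Finset.image rk (L y)).card = (L y).card :=
              Finset.card_image_of_injOn (fun a _ b _ hab => hrk_inj a b hab)
            rw [Finset.card_range, hc]
        have hmem : k' ∈ Finset.image rk (L y) := by
          rw [himg]; exact Finset.mem_range.mpr hk'
        obtain ⟨x, _, hx⟩ := Finset.mem_image.mp hmem
        exact ⟨x, hx⟩
      intro k
      have hub2 : ∃ y, k ≤ rk y := by
        by_contra hc
        push_neg at hc
        have hsub : Finset.image rk (Finset.range (k+1)) ⊆ Finset.range k := by
          intro z hz
          obtain ⟨u, _, rfl⟩ := Finset.mem_image.mp hz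
          exact Finset.mem_range.mpr (hc u)
        have h1 : (Finset.image rk (Finset.range (k+1))).card = k+1 := by
          rw [Finset.card_image_of_injOn (fun a _ b _ hab => hrk_inj a b hab),
            Finset.card_range]
        have h2 := Finset.card_le_card hsub
        rw [h1, Finset.card_range] at h2
        omega
      obtain ⟨y, hy⟩ := hub2
      rcases Nat.eq_or_lt_of_le hy with h | h
      · exact ⟨y, h.symm⟩
      · exact hdown y k h
    let e : ℕ → ℕ := fun k => (hrk_surj k).choose
    have he : ∀ k, rk (e k) = k := fun k => (hrk_surj k).choose_spec
    refine ⟨⟨e, ⟨?_, ?_⟩, ?_⟩, ?_⟩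
    · intro a b h
      rw [← he a, ← he b, h]
    · intro y
      exact ⟨rk y, hrk_inj _ _ (he (rk y))⟩
    · intro a b
      constructor
      · intro hab
        rcases htotal (e a) (e b) with h | h
        · exact h
        · by_cases hEq : e a = e b
          · rw [hEq]; exact hrefl _
          · have hlt := hrk_lt (e b) (e a) h (fun hh => hEq hh.symm)
            rw [he, he] at hlt
            exfalso; omega
      · intro h
        by_cases hEq : e a = e b
        · have : a = b := by rw [← he a, ← he b, hEq]
          omega
        · have hlt := hrk_lt (e a) (e b) h hEq
          rw [he, he] at hlt
          omega
    · exact Subrelation.wf (fun {a b} h => hrk_lt a b h.1 h.2) (InvImage.wf rk Nat.lt_wfRel.wf)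
end
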